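/- Let ℓ ≥ 2 and let A_1 ≥ A_2 ≥ … ≥ A_ℓ ≥ 0 be real numbers. Suppose ∑_{i=1}^{j} A_i ≤ j·A_{j+1} + j for every j with 2 ≤ j ≤ ℓ−1, and ∑_{i=1}^{ℓ} A_i ≤ 2ℓ − 1. Then (A_1 + A_2)/2 ≤ H_{ℓ-1} + 1/2. -/

import Mathlib

/-- The m-th harmonicR number H_m = ∑_{j=1}^m 1/j. -/
noncomputable def harmonicR (m : ℕ) : ℝ := ∑ j ∈ Finset.range m, 1 / (j + 1 : ℝ)

lemma aux_tel (A : ℕ → ℝ) : ∀ l : ℕ, 2 ≤ l →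
    (∀ j : ℕ, 2 ≤ j → j ≤ l - 1 →
      ∑ i ∈ Finset.Icc 1 j, A i ≤ (j : ℝ) * A (j + 1) + (j : ℝ)) →
    (A 1 + A 2) / 2 ≤ (∑ j ∈ Finset.Icc 3 l, 1 / (j : ℝ)) +
      (∑ i ∈ Finset.Icc 1 l, A i) / l := by
  intro l hl
  induction l, hl using Nat.le_induction with
  | base =>
    intro _
    have : Finset.Icc 1 2 = {1, 2} := by decide
    rw [this]
    norm_num [Finset.Icc_eq_empty_of_lt]
  | succ l hl ih =>
    intro h
    have hS : ∑ i ∈ Finset.Icc 1 l, A i ≤ (l : ℝ) * A (l + 1) + l := by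
      have := h l hl (by omega); exact this
    have ih' := ih (fun j hj hjl => h j hj (by omega))
    rw [Finset.sum_Icc_succ_top (by omega : 3 ≤ l + 1),
        Finset.sum_Icc_succ_top (by omega : 1 ≤ l + 1)]
    have hl0 : (0 : ℝ) < (l : ℝ) := by exact_mod_cast (by omega : 0 < l)
    have hl1 : (0 : ℝ) < ((l : ℝ) + 1) := by linarith
    set S := ∑ i ∈ Finset.Icc 1 l, A i with hSdef
    have key : S / l ≤ 1 / ((l : ℝ) + 1) + (S + A (l + 1)) / ((l : ℝ) + 1) := by
      rw [← add_div, div_le_div_iff₀ hl0 hl1]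
      nlinarith [hS]
    push_cast
    push_cast at ih'
    linarith

lemma harm_aux : ∀ l : ℕ, 2 ≤ l →
    (∑ j ∈ Finset.Icc 3 l, 1 / (j : ℝ)) + 2 - 1 / l = harmonicR (l - 1) + 1 / 2 := by
  intro l hl
  induction l, hl using Nat.le_induction with
  | base =>
    norm_num [Finset.Icc_eq_empty_of_lt, harmonicR]
  | succ l hl ih =>
    have e : l - 1 + 1 = l := by omega
    have hl0 : (0 : ℝ) < (l : ℝ) := by exact_mod_cast (by omega : 0 < l)
    have hh : harmonicR ((l + 1) - 1) = harmonicR (l - 1) + 1 / (l : ℝ) := by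
      have : harmonicR l = harmonicR (l - 1) + 1 / ((l - 1 : ℕ) + 1 : ℝ) := by
        conv_lhs => rw [← e]
        rw [harmonicR, Finset.sum_range_succ, ← harmonicR]
      simp only [Nat.add_sub_cancel]
      rw [this]
      congr 1
      rw [Nat.cast_sub (by omega : 1 ≤ l)]
      ring_nf
    rw [Finset.sum_Icc_succ_top (by omega : 3 ≤ l + 1), hh]
    push_cast
    push_cast at ih
    linarith

theorem stmt_5 (l : ℕ) (hl : 2 ≤ l) (A : ℕ → ℝ)
    (hmono : ∀ i : ℕ, 1 ≤ i → i < l → A (i + 1) ≤ A i)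
    (hnonneg : 0 ≤ A l)
    (hineq : ∀ j : ℕ, 2 ≤ j → j ≤ l - 1 →
      ∑ i ∈ Finset.Icc 1 j, A i ≤ (j : ℝ) * A (j + 1) + (j : ℝ))
    (hlast : ∑ i ∈ Finset.Icc 1 l, A i ≤ 2 * (l : ℝ) - 1) :
    (A 1 + A 2) / 2 ≤ harmonicR (l - 1) + 1 / 2 := by
  have h1 := aux_tel A l hl hineq
  have hc := harm_aux l hl
  have hl0 : (0 : ℝ) < (l : ℝ) := by exact_mod_cast (by omega : 0 < l)
  have h2 : (∑ i ∈ Finset.Icc 1 l, A i) / l ≤ 2 - 1 / (l : ℝ) := by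
    rw [div_le_iff₀ hl0]
    have : (2 - 1 / (l : ℝ)) * l = 2 * l - 1 := by field_simp
    rw [this]
    exact hlast
  linarith
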